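/- There is no continuous map ε : S² → ℂ³ such that for every unit vector k ∈ S²: ε(k) ≠ 0, k·ε(k) = 0, and conj(ε(k)) ×_ℂ ε(k) = 0. Equivalently, there is no globally continuous nonvanishing linearly polarized transverse polarization field on the momentum sphere, so no global polarization basis of the electromagnetic plasma-wave bundle can consist of linearly polarized waves. -/

import Mathlib

open scoped BigOperators ComplexConjugate

/-- The Levi-Civita symbol on three indices. -/
def levicivita (a b c : Fin 3) : ℤ :=
  (((b : ℤ) - (a : ℤ)) * ((c : ℤ) - (b : ℤ)) * ((c : ℤ) - (a : ℤ))) / 2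

/-- The complexified cross product on `ℂ³`. -/
noncomputable def crossC (u v : Fin 3 → ℂ) : Fin 3 → ℂ :=
  fun a => ∑ b, ∑ c, (levicivita a b c : ℂ) * u b * v c

section helpers

open Complex Filter Set

/-- A locally stable nonempty subset of `ℝ` is everything. -/
lemma NGLP.mem_of_locally_stable {S : Set ℝ} (h : ∀ t : ℝ, ∀ᶠ s in nhds t, (s ∈ S ↔ t ∈ S))
    {a : ℝ} (ha : a ∈ S) (b : ℝ) : b ∈ S := by
  have hcl : IsClopen S := by
    constructor
    · rw [← isOpen_compl_iff, isOpen_iff_mem_nhds]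
      intro t ht
      exact (h t).mono fun s hs => fun hsS => ht (hs.mp hsS)
    · rw [isOpen_iff_mem_nhds]
      intro t ht
      exact (h t).mono fun s hs => hs.mpr ht
  have := hcl.eq_univ ⟨a, ha⟩
  simp [this]

/-- A continuous integer-valued function on ℝ is constant. -/
lemma NGLP.int_valued_eq (g : ℝ → ℝ) (hg : Continuous g) (hint : ∀ t, ∃ n : ℤ, g t = n)
    (a b : ℝ) : g a = g b := by
  have key : ∀ t : ℝ, ∀ᶠ s in nhds t, g s = g t := by
    intro t
    have hev : ∀ᶠ s in nhds t, |g s - g t| < 1 := by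
      have hc : ContinuousAt (fun s => |g s - g t|) t := by fun_prop
      have h0 : |g t - g t| < 1 := by simp
      exact hc.eventually_lt continuousAt_const h0
    refine hev.mono fun s hs => ?_
    obtain ⟨n, hn⟩ := hint s
    obtain ⟨m, hm⟩ := hint t
    rw [hn, hm] at hs ⊢
    have habs : |((n - m : ℤ) : ℝ)| < 1 := by push_cast; simpa using hs
    rw [← Int.cast_abs] at habs
    have h5 : |n - m| < 1 := by exact_mod_cast habs
    have h6 : n = m := by have := Int.abs_lt_one_iff.mp h5; omega
    exact_mod_cast congrArg (Int.cast : ℤ → ℝ) h6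
  have hb : b ∈ {s : ℝ | g s = g a} :=
    NGLP.mem_of_locally_stable (S := {s : ℝ | g s = g a})
      (fun t => (key t).mono fun s hs => by simp only [Set.mem_setOf_eq, hs])
      (show a ∈ {s : ℝ | g s = g a} from rfl) b
  exact hb.symm

/-- Transfer a phase lift from a nearby nonvanishing curve. -/
lemma NGLP.lift_transfer (F₁ F₂ : ℝ → ℂ) (h : ℝ → ℝ)
    (hF₁ : Continuous F₁) (hF₂ : Continuous F₂) (h1ne : ∀ θ, F₁ θ ≠ 0)
    (hcl : ∀ θ, ‖F₂ θ - F₁ θ‖ < ‖F₁ θ‖)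
    (hh : Continuous h)
    (hlift : ∀ θ, F₁ θ = (‖F₁ θ‖ : ℂ) * Complex.exp (h θ * Complex.I)) :
    ∃ h' : ℝ → ℝ, Continuous h' ∧
      (∀ θ, F₂ θ = (‖F₂ θ‖ : ℂ) * Complex.exp (h' θ * Complex.I)) ∧
      ∀ θ₁ θ₂, F₁ θ₁ = F₁ θ₂ → F₂ θ₁ = F₂ θ₂ → h' θ₁ - h' θ₂ = h θ₁ - h θ₂ := by
  have h2ne : ∀ θ, F₂ θ ≠ 0 := by
    intro θ h0
    have h1 := hcl θ
    rw [h0] at h1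
    simp at h1
  set r : ℝ → ℂ := fun θ => F₂ θ / F₁ θ with hr
  have hrne : ∀ θ, r θ ≠ 0 := fun θ => div_ne_zero (h2ne θ) (h1ne θ)
  have hre : ∀ θ, 0 < (r θ).re := by
    intro θ
    have hpos : 0 < ‖F₁ θ‖ := norm_pos_iff.mpr (h1ne θ)
    have heq : r θ - 1 = (F₂ θ - F₁ θ) / F₁ θ := by
      rw [hr]; field_simp [h1ne θ]
    have h1 : ‖r θ - 1‖ < 1 := by
      rw [heq, norm_div, div_lt_one hpos]
      exact hcl θ
    have h2 := Complex.abs_re_le_norm (r θ - 1)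
    have h3 : (r θ - 1).re = (r θ).re - 1 := by simp
    rw [h3] at h2
    have h5 := abs_lt.mp (lt_of_le_of_lt h2 h1)
    linarith [h5.1]
  have hslit : ∀ θ, r θ ∈ Complex.slitPlane := fun θ =>
    Complex.mem_slitPlane_iff.mpr (Or.inl (hre θ))
  have hrc : Continuous r := hF₂.div hF₁ h1ne
  have hargc : Continuous fun θ => (r θ).arg := by
    rw [continuous_iff_continuousAt]
    exact fun θ => (Complex.continuousAt_arg (hslit θ)).comp (hrc.continuousAt)
  refine ⟨fun θ => h θ + (r θ).arg, hh.add hargc, fun θ => ?_, fun θ₁ θ₂ e1 e2 => ?_⟩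
  · have e2 : (‖r θ‖ : ℂ) * Complex.exp ((r θ).arg * Complex.I) = r θ :=
      Complex.norm_mul_exp_arg_mul_I (r θ)
    have h1 : (‖F₁ θ‖ : ℂ) ≠ 0 := by
      exact_mod_cast (norm_ne_zero_iff.mpr (h1ne θ))
    have h2 : (‖F₂ θ‖ : ℂ) ≠ 0 := by
      exact_mod_cast (norm_ne_zero_iff.mpr (h2ne θ))
    have h3 : (‖r θ‖ : ℂ) ≠ 0 := by
      exact_mod_cast (norm_ne_zero_iff.mpr (hrne θ))
    have habsr : (‖r θ‖ : ℂ) = (‖F₂ θ‖ : ℂ) / (‖F₁ θ‖ : ℂ) := by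
      rw [hr]; push_cast [norm_div]; ring
    have hexp : Complex.exp (((h θ : ℂ) + ((r θ).arg : ℂ)) * Complex.I)
        = Complex.exp ((h θ : ℂ) * Complex.I) * Complex.exp (((r θ).arg : ℂ) * Complex.I) := by
      rw [← Complex.exp_add]; ring_nf
    simp only [Complex.ofReal_add]
    rw [hexp]
    have hFe : Complex.exp ((h θ : ℂ) * Complex.I) = F₁ θ / (‖F₁ θ‖ : ℂ) := by
      rw [eq_div_iff h1, mul_comm]; exact (hlift θ).symm
    have hre2 : Complex.exp (((r θ).arg : ℂ) * Complex.I) = r θ / (‖r θ‖ : ℂ) := by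
      rw [eq_div_iff h3, mul_comm]; exact e2
    rw [hFe, hre2, habsr, hr]
    field_simp [h1ne θ]
  · have : r θ₁ = r θ₂ := by rw [hr]; simp only; rw [e1, e2]
    simp [this]

/-- The pointwise algebraic heart: a nonzero, transverse, linearly polarized complex
vector has nonvanishing "double angle" invariant in the tangent frame. -/
lemma NGLP.key_alg (s c p q : ℝ) (E0 E1 E2 : ℂ)
    (hs : s^2 + c^2 = 1) (hpq : p^2 + q^2 = 1)
    (hE : ¬(E0 = 0 ∧ E1 = 0 ∧ E2 = 0))
    (hT : (s:ℂ)*p*E0 + (s:ℂ)*q*E1 + (c:ℂ)*E2 = 0)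
    (g0 : conj E1 * E2 - conj E2 * E1 = 0)
    (g1 : conj E2 * E0 - conj E0 * E2 = 0)
    (g2 : conj E0 * E1 - conj E1 * E0 = 0) :
    ((c:ℂ)*p*E0 + (c:ℂ)*q*E1 - (s:ℂ)*E2) + Complex.I * (-(q:ℂ)*E0 + (p:ℂ)*E1) ≠ 0 := by
  intro hw
  set A : ℂ := (c:ℂ)*p*E0 + (c:ℂ)*q*E1 - (s:ℂ)*E2 with hAdef
  set B : ℂ := -(q:ℂ)*E0 + (p:ℂ)*E1 with hBdef
  have hsC : (s:ℂ)^2 + (c:ℂ)^2 = 1 := by exact_mod_cast hs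
  have hpqC : (p:ℂ)^2 + (q:ℂ)^2 = 1 := by exact_mod_cast hpq
  have key : conj A * B - A * conj B = 0 := by
    rw [hAdef, hBdef]
    simp only [map_add, map_sub, map_mul, map_neg, Complex.conj_ofReal]
    linear_combination (s:ℂ)*p*g0 + (s:ℂ)*q*g1 + (c:ℂ)*((p:ℂ)^2+(q:ℂ)^2)*g2
  have hA : A = -Complex.I * B := by linear_combination hw
  have hBB : B * conj B = 0 := by
    rw [hA] at key
    simp only [map_mul, map_neg, Complex.conj_I] at key
    linear_combination (-Complex.I/2) * key + (B * conj B) * Complex.I_sq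
  have hB : B = 0 := by
    rcases mul_eq_zero.mp hBB with h | h
    · exact h
    · simpa using congrArg conj h
  have hA0 : A = 0 := by rw [hA, hB, mul_zero]
  refine hE ⟨?_, ?_, ?_⟩
  · linear_combination (c:ℂ)*p*hA0 - (q:ℂ)*hB + (s:ℂ)*p*hT
      - ((p:ℂ)^2*E0 + (p:ℂ)*q*E1)*hsC - E0*hpqC
  · linear_combination (c:ℂ)*q*hA0 + (p:ℂ)*hB + (s:ℂ)*q*hT
      - ((q:ℂ)^2*E1 + (p:ℂ)*q*E0)*hsC - E1*hpqC
  · linear_combination -(s:ℂ)*hA0 + (c:ℂ)*hT - E2*hsC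

lemma NGLP.crossC_comps (E : Fin 3 → ℂ) (h : crossC (fun a => conj (E a)) E = 0) :
    (conj (E 1) * E 2 - conj (E 2) * E 1 = 0) ∧
    (conj (E 2) * E 0 - conj (E 0) * E 2 = 0) ∧
    (conj (E 0) * E 1 - conj (E 1) * E 0 = 0) := by
  have h0 := congrFun h 0
  have h1 := congrFun h 1
  have h2 := congrFun h 2
  simp only [crossC, Fin.sum_univ_three, levicivita, Pi.zero_apply] at h0 h1 h2
  norm_num at h0 h1 h2
  exact ⟨by linear_combination h0, by linear_combination h1, by linear_combination h2⟩

/-- Spherical coordinates. -/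
noncomputable def NGLP.kk (z : ℝ × ℝ) : Fin 3 → ℝ :=
  ![Real.sin z.1 * Real.cos z.2, Real.sin z.1 * Real.sin z.2, Real.cos z.1]

/-- The double-angle invariant of the field in the spherical frame. -/
noncomputable def NGLP.FF (ε : (Fin 3 → ℝ) → (Fin 3 → ℂ)) (z : ℝ × ℝ) : ℂ :=
  (((Real.cos z.1 : ℂ) * (Real.cos z.2 : ℂ) * ε (NGLP.kk z) 0
      + (Real.cos z.1 : ℂ) * (Real.sin z.2 : ℂ) * ε (NGLP.kk z) 1
      - (Real.sin z.1 : ℂ) * ε (NGLP.kk z) 2)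
    + Complex.I * (-(Real.sin z.2 : ℂ) * ε (NGLP.kk z) 0
      + (Real.cos z.2 : ℂ) * ε (NGLP.kk z) 1)) ^ 2

lemma NGLP.kk_mem (z : ℝ × ℝ) : ∑ a, (NGLP.kk z a)^2 = 1 := by
  simp only [NGLP.kk, Fin.sum_univ_three, Matrix.cons_val_zero, Matrix.cons_val_one,
    Matrix.head_cons, Matrix.cons_val_two, Matrix.tail_cons]
  nlinarith [Real.sin_sq_add_cos_sq z.1, Real.sin_sq_add_cos_sq z.2]

lemma NGLP.kk_cont : Continuous NGLP.kk := by
  apply continuous_pi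
  intro i
  fin_cases i <;> simp [NGLP.kk] <;> fun_prop

end helpers

section main

open Complex Filter Set

variable {ε : (Fin 3 → ℝ) → (Fin 3 → ℂ)}

lemma NGLP.FF_cont (hcont : ContinuousOn ε {k : Fin 3 → ℝ | ∑ a, (k a) ^ 2 = 1}) :
    Continuous (NGLP.FF ε) := by
  have hEv : Continuous fun z => ε (NGLP.kk z) :=
    hcont.comp_continuous NGLP.kk_cont fun z => by
      simpa [Set.mem_setOf_eq] using NGLP.kk_mem z
  have hEi : ∀ i, Continuous fun z => ε (NGLP.kk z) i :=
    fun i => (continuous_apply i).comp hEv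
  unfold NGLP.FF
  have h1 : Continuous fun z : ℝ × ℝ => Real.cos z.1 := by fun_prop
  have h2 : Continuous fun z : ℝ × ℝ => Real.cos z.2 := by fun_prop
  have h3 : Continuous fun z : ℝ × ℝ => Real.sin z.1 := by fun_prop
  have h4 : Continuous fun z : ℝ × ℝ => Real.sin z.2 := by fun_prop
  continuity

lemma NGLP.FF_ne
    (hprop : ∀ k : Fin 3 → ℝ, (∑ a, (k a) ^ 2 = 1) →
        ε k ≠ 0 ∧
        (∑ a, (k a : ℂ) * ε k a = 0) ∧
        crossC (fun a => conj (ε k a)) (ε k) = 0) (z : ℝ × ℝ) :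
    NGLP.FF ε z ≠ 0 := by
  obtain ⟨hne, hT, hX⟩ := hprop (NGLP.kk z) (NGLP.kk_mem z)
  obtain ⟨g0, g1, g2⟩ := NGLP.crossC_comps _ hX
  apply pow_ne_zero
  apply NGLP.key_alg (Real.sin z.1) (Real.cos z.1) (Real.cos z.2) (Real.sin z.2)
    (ε (NGLP.kk z) 0) (ε (NGLP.kk z) 1) (ε (NGLP.kk z) 2)
    (Real.sin_sq_add_cos_sq z.1) (Real.cos_sq_add_sin_sq z.2)
    ?_ ?_ g0 g1 g2
  · rintro ⟨a0, a1, a2⟩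
    apply hne
    funext i
    fin_cases i <;> assumption
  · rw [Fin.sum_univ_three] at hT
    have e0 : NGLP.kk z 0 = Real.sin z.1 * Real.cos z.2 := rfl
    have e1 : NGLP.kk z 1 = Real.sin z.1 * Real.sin z.2 := rfl
    have e2 : NGLP.kk z 2 = Real.cos z.1 := rfl
    rw [e0, e1, e2] at hT
    simp only [Complex.ofReal_mul] at hT
    linear_combination hT

lemma NGLP.FF_per (φ θ : ℝ) : NGLP.FF ε (φ, θ + 2*Real.pi) = NGLP.FF ε (φ, θ) := by
  have hk : NGLP.kk (φ, θ + 2*Real.pi) = NGLP.kk (φ, θ) := by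
    funext i
    fin_cases i <;>
      simp [NGLP.kk, Real.cos_add_two_pi, Real.sin_add_two_pi]
  unfold NGLP.FF
  rw [hk]
  simp only [Real.cos_add_two_pi, Real.sin_add_two_pi]

lemma NGLP.FF_north (θ : ℝ) :
    NGLP.FF ε (0, θ) = Complex.exp ((-(2*θ) : ℝ) * Complex.I) * NGLP.FF ε (0, 0) := by
  have hk : NGLP.kk (0, θ) = NGLP.kk (0, 0) := by
    funext i
    fin_cases i <;> simp [NGLP.kk]
  unfold NGLP.FF
  rw [hk]
  set e0 := ε (NGLP.kk (0, 0)) 0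
  set e1 := ε (NGLP.kk (0, 0)) 1
  set e2 := ε (NGLP.kk (0, 0)) 2
  simp only [Real.cos_zero, Real.sin_zero, Complex.ofReal_one, Complex.ofReal_zero]
  have hbase : ((1:ℂ) * (Real.cos θ : ℂ) * e0 + (1:ℂ) * (Real.sin θ : ℂ) * e1 - 0 * e2)
      + Complex.I * (-(Real.sin θ:ℂ) * e0 + (Real.cos θ:ℂ) * e1)
      = Complex.exp (-(θ:ℂ) * Complex.I) * (((1:ℂ)*1*e0 + (1:ℂ)*0*e1 - 0*e2)
        + Complex.I * (-(0:ℂ)*e0 + 1*e1)) := by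
    rw [show (-(θ:ℂ) * Complex.I) = ((-θ : ℂ) * Complex.I) by ring, Complex.exp_mul_I,
      Complex.cos_neg, Complex.sin_neg, ← Complex.ofReal_cos, ← Complex.ofReal_sin]
    linear_combination ((Real.sin θ:ℂ) * e1) * Complex.I_sq
  rw [hbase, mul_pow, ← Complex.exp_nat_mul]
  push_cast
  ring_nf

lemma NGLP.FF_south (θ : ℝ) :
    NGLP.FF ε (Real.pi, θ) = Complex.exp (((2*θ) : ℝ) * Complex.I) * NGLP.FF ε (Real.pi, 0) := by
  have hk : NGLP.kk (Real.pi, θ) = NGLP.kk (Real.pi, 0) := by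
    funext i
    fin_cases i <;> simp [NGLP.kk]
  unfold NGLP.FF
  rw [hk]
  set e0 := ε (NGLP.kk (Real.pi, 0)) 0
  set e1 := ε (NGLP.kk (Real.pi, 0)) 1
  set e2 := ε (NGLP.kk (Real.pi, 0)) 2
  simp only [Real.cos_pi, Real.sin_pi, Real.cos_zero, Real.sin_zero, Complex.ofReal_one,
    Complex.ofReal_zero, Complex.ofReal_neg]
  have hbase : ((-1:ℂ) * (Real.cos θ : ℂ) * e0 + (-1:ℂ) * (Real.sin θ : ℂ) * e1 - 0 * e2)
      + Complex.I * (-(Real.sin θ:ℂ) * e0 + (Real.cos θ:ℂ) * e1)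
      = Complex.exp ((θ:ℂ) * Complex.I) * (((-1:ℂ)*1*e0 + (-1:ℂ)*0*e1 - 0*e2)
        + Complex.I * (-(0:ℂ)*e0 + 1*e1)) := by
    rw [Complex.exp_mul_I, ← Complex.ofReal_cos, ← Complex.ofReal_sin]
    linear_combination (-(Real.sin θ:ℂ) * e1) * Complex.I_sq
  rw [hbase, mul_pow, ← Complex.exp_nat_mul]
  push_cast
  ring_nf

end main


section final

open Complex Filter Set

/-- There is no continuous, nowhere-vanishing, transverse, linearly polarized
polarization field on the momentum sphere: no continuous `ε : S² → ℂ³` with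
`ε(k) ≠ 0`, `k·ε(k) = 0` and `conj(ε(k)) ×_ℂ ε(k) = 0` everywhere.  Hence no global
polarization basis of the electromagnetic plasma-wave bundle can consist of linearly
polarized waves. -/
theorem no_global_linear_polarization :
    ¬ ∃ ε : (Fin 3 → ℝ) → (Fin 3 → ℂ),
      ContinuousOn ε {k : Fin 3 → ℝ | ∑ a, (k a) ^ 2 = 1} ∧
      ∀ k : Fin 3 → ℝ, (∑ a, (k a) ^ 2 = 1) →
        ε k ≠ 0 ∧
        (∑ a, (k a : ℂ) * ε k a = 0) ∧
        crossC (fun a => conj (ε k a)) (ε k) = 0 := by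
  rintro ⟨ε, hcont, hprop⟩
  have hFc : Continuous (NGLP.FF ε) := NGLP.FF_cont hcont
  have hFne : ∀ z, NGLP.FF ε z ≠ 0 := NGLP.FF_ne hprop
  have hper : ∀ φ θ, NGLP.FF ε (φ, θ + 2*Real.pi) = NGLP.FF ε (φ, θ) := fun φ θ =>
    NGLP.FF_per φ θ
  have hperZ : ∀ φ θ (n : ℤ), NGLP.FF ε (φ, θ - n * (2*Real.pi)) = NGLP.FF ε (φ, θ) := by
    intro φ θ n
    have hp : Function.Periodic (fun θ => NGLP.FF ε (φ, θ)) (2*Real.pi) := fun θ => hper φ θ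
    exact hp.sub_int_mul_eq n
  have hper0 : ∀ φ, NGLP.FF ε (φ, 2*Real.pi) = NGLP.FF ε (φ, 0) := by
    intro φ
    simpa using hper φ 0
  have hcontθ : ∀ φ, Continuous fun θ => NGLP.FF ε (φ, θ) := fun φ =>
    hFc.comp (continuous_const.prodMk continuous_id)
  set S : Set ℝ := {φ | ∃ h : ℝ → ℝ, (Continuous h ∧
      ∀ θ, NGLP.FF ε (φ, θ)
        = (‖NGLP.FF ε (φ, θ)‖ : ℂ) * Complex.exp ((h θ : ℂ) * Complex.I)) ∧
      h (2*Real.pi) - h 0 = -(4*Real.pi)} with hSdef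
  have h0S : 0 ∈ S := by
    refine ⟨fun θ => (NGLP.FF ε (0,0)).arg - 2*θ, ⟨by fun_prop, fun θ => ?_⟩, by ring⟩
    have key := Complex.norm_mul_exp_arg_mul_I (NGLP.FF ε (0,0))
    have habs : ‖Complex.exp (((-(2*θ):ℝ) : ℂ) * Complex.I) * NGLP.FF ε (0,0)‖
        = ‖NGLP.FF ε (0,0)‖ := by
      rw [norm_mul, Complex.norm_exp]
      simp
    have e1 : ((((NGLP.FF ε (0,0)).arg - 2*θ : ℝ)) : ℂ) * Complex.I
        = ((NGLP.FF ε (0,0)).arg : ℂ) * Complex.I + ((-(2*θ) : ℝ) : ℂ) * Complex.I := by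
      push_cast; ring
    rw [NGLP.FF_north θ, habs, e1, Complex.exp_add, ← mul_assoc, key]
    ring
  have hstep : ∀ φ₀ : ℝ, ∀ᶠ φ in nhds φ₀, (φ ∈ S ↔ φ₀ ∈ S) := by
    intro φ₀
    have hc1 : Continuous fun z : ℝ × ℝ => NGLP.FF ε (z.1, z.2) :=
      hFc.comp (continuous_fst.prodMk continuous_snd)
    have hc2 : Continuous fun z : ℝ × ℝ => NGLP.FF ε (φ₀, z.2) :=
      hFc.comp (continuous_const.prodMk continuous_snd)
    have hd : Continuous fun z : ℝ × ℝ =>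
        ‖NGLP.FF ε (z.1, z.2) - NGLP.FF ε (φ₀, z.2)‖ :=
      continuous_norm.comp (hc1.sub hc2)
    have ha2 : Continuous fun z : ℝ × ℝ => ‖NGLP.FF ε (φ₀, z.2)‖ :=
      continuous_norm.comp hc2
    have ha1 : Continuous fun z : ℝ × ℝ => ‖NGLP.FF ε (z.1, z.2)‖ :=
      continuous_norm.comp hc1
    have hev : ∀ᶠ φ in nhds φ₀, ∀ θ ∈ Icc (0:ℝ) (2*Real.pi),
        ‖NGLP.FF ε (φ, θ) - NGLP.FF ε (φ₀, θ)‖ < ‖NGLP.FF ε (φ₀, θ)‖ ∧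
        ‖NGLP.FF ε (φ, θ) - NGLP.FF ε (φ₀, θ)‖ < ‖NGLP.FF ε (φ, θ)‖ := by
      apply isCompact_Icc.eventually_forall_of_forall_eventually
      intro θ hθ
      have hlt1 : (fun z : ℝ × ℝ => ‖NGLP.FF ε (z.1, z.2) - NGLP.FF ε (φ₀, z.2)‖)
          (φ₀, θ) < (fun z : ℝ × ℝ => ‖NGLP.FF ε (φ₀, z.2)‖) (φ₀, θ) := by
        simpa using norm_pos_iff.mpr (hFne (φ₀, θ))
      have hlt2 : (fun z : ℝ × ℝ => ‖NGLP.FF ε (z.1, z.2) - NGLP.FF ε (φ₀, z.2)‖)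
          (φ₀, θ) < (fun z : ℝ × ℝ => ‖NGLP.FF ε (z.1, z.2)‖) (φ₀, θ) := by
        simpa using norm_pos_iff.mpr (hFne (φ₀, θ))
      exact (hd.continuousAt.eventually_lt ha2.continuousAt hlt1).and
        (hd.continuousAt.eventually_lt ha1.continuousAt hlt2)
    refine hev.mono fun φ hφ => ?_
    have hall : ∀ θ : ℝ,
        ‖NGLP.FF ε (φ, θ) - NGLP.FF ε (φ₀, θ)‖ < ‖NGLP.FF ε (φ₀, θ)‖ ∧
        ‖NGLP.FF ε (φ, θ) - NGLP.FF ε (φ₀, θ)‖ < ‖NGLP.FF ε (φ, θ)‖ := by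
      intro θ
      have h2π : 0 < 2*Real.pi := by positivity
      have hθ' : θ - (⌊θ / (2*Real.pi)⌋ : ℤ) * (2*Real.pi) ∈ Icc (0:ℝ) (2*Real.pi) :=
        ⟨Int.sub_floor_div_mul_nonneg θ h2π, (Int.sub_floor_div_mul_lt θ h2π).le⟩
      have h1 := hφ _ hθ'
      rwa [hperZ φ, hperZ φ₀] at h1
    constructor
    · rintro ⟨h, ⟨hhc, hhl⟩, hwind⟩
      obtain ⟨h', hc', hl', hdiff⟩ := NGLP.lift_transfer
        (fun θ => NGLP.FF ε (φ, θ)) (fun θ => NGLP.FF ε (φ₀, θ)) h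
        (hcontθ φ) (hcontθ φ₀) (fun θ => hFne _)
        (fun θ => by rw [norm_sub_rev]; exact (hall θ).2) hhc hhl
      exact ⟨h', ⟨hc', hl'⟩, by rw [hdiff _ _ (hper0 φ) (hper0 φ₀)]; exact hwind⟩
    · rintro ⟨h, ⟨hhc, hhl⟩, hwind⟩
      obtain ⟨h', hc', hl', hdiff⟩ := NGLP.lift_transfer
        (fun θ => NGLP.FF ε (φ₀, θ)) (fun θ => NGLP.FF ε (φ, θ)) h
        (hcontθ φ₀) (hcontθ φ) (fun θ => hFne _)
        (fun θ => (hall θ).1) hhc hhl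
      exact ⟨h', ⟨hc', hl'⟩, by rw [hdiff _ _ (hper0 φ₀) (hper0 φ)]; exact hwind⟩
  have hπS : Real.pi ∈ S := NGLP.mem_of_locally_stable hstep h0S Real.pi
  obtain ⟨h, ⟨hhc, hhl⟩, hwind⟩ := hπS
  have hel : ∀ θ, NGLP.FF ε (Real.pi, θ)
      = (‖NGLP.FF ε (Real.pi, θ)‖ : ℂ)
        * Complex.exp ((((NGLP.FF ε (Real.pi, 0)).arg + 2*θ : ℝ) : ℂ) * Complex.I) := by
    intro θ
    have key := Complex.norm_mul_exp_arg_mul_I (NGLP.FF ε (Real.pi, 0))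
    have habs : ‖Complex.exp ((((2*θ):ℝ) : ℂ) * Complex.I) * NGLP.FF ε (Real.pi, 0)‖
        = ‖NGLP.FF ε (Real.pi, 0)‖ := by
      rw [norm_mul, Complex.norm_exp]
      simp
    have e1 : ((((NGLP.FF ε (Real.pi, 0)).arg + 2*θ : ℝ)) : ℂ) * Complex.I
        = ((NGLP.FF ε (Real.pi, 0)).arg : ℂ) * Complex.I + (((2*θ) : ℝ) : ℂ) * Complex.I := by
      push_cast; ring
    rw [NGLP.FF_south θ, habs, e1, Complex.exp_add, ← mul_assoc, key]
    ring
  have hexp_eq : ∀ θ, Complex.exp ((h θ : ℂ) * Complex.I)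
      = Complex.exp ((((NGLP.FF ε (Real.pi, 0)).arg + 2*θ : ℝ) : ℂ) * Complex.I) := by
    intro θ
    have habs : (‖NGLP.FF ε (Real.pi, θ)‖ : ℂ) ≠ 0 := by
      exact_mod_cast norm_ne_zero_iff.mpr (hFne _)
    exact mul_left_cancel₀ habs ((hhl θ).symm.trans (hel θ))
  have hint : ∀ θ, ∃ n : ℤ,
      (h θ - ((NGLP.FF ε (Real.pi, 0)).arg + 2*θ)) / (2*Real.pi) = n := by
    intro θ
    have h1 : Complex.exp (((h θ : ℂ) - (((NGLP.FF ε (Real.pi, 0)).arg + 2*θ : ℝ) : ℂ))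
        * Complex.I) = 1 := by
      rw [sub_mul, Complex.exp_sub, hexp_eq θ, div_self (Complex.exp_ne_zero _)]
    obtain ⟨n, hn⟩ := Complex.exp_eq_one_iff.mp h1
    refine ⟨n, ?_⟩
    have him := congrArg Complex.im hn
    simp only [Complex.mul_im, Complex.sub_re, Complex.sub_im, Complex.ofReal_re,
      Complex.ofReal_im, Complex.I_re, Complex.I_im, Complex.mul_re, Complex.intCast_re,
      Complex.intCast_im] at him
    have hre : h θ - ((NGLP.FF ε (Real.pi, 0)).arg + 2*θ) = n * (2*Real.pi) := by
      norm_num at him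
      linarith [him]
    rw [hre]
    field_simp
  have hconst := NGLP.int_valued_eq
    (fun θ => (h θ - ((NGLP.FF ε (Real.pi, 0)).arg + 2*θ)) / (2*Real.pi))
    (by fun_prop) hint 0 (2*Real.pi)
  have h2π : (2*Real.pi) ≠ 0 := by positivity
  rw [div_eq_div_iff (by positivity) (by positivity)] at hconst
  have hπ := Real.pi_pos
  nlinarith [hconst, hwind, hπ]

end final
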